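/- The Stieltjes transform g(z) = ∫ (λ − z)^{−1} dσ_w(λ) of the semicircle distribution with parameter v satisfies the quadratic equation v² g(z)² + z g(z) + 1 = 0 for all z with Im z > 0. -/

import Mathlib

open MeasureTheory Complex intervalIntegral

/-- The Wigner semicircle density with parameter `v`. -/
noncomputable def scDensity (v lam : ℝ) : ℝ :=
  if |lam| ≤ 2 * v then (1 / (2 * Real.pi * v ^ 2)) * Real.sqrt (4 * v ^ 2 - lam ^ 2)
  else 0

noncomputable def scV (v : ℝ) (z : ℂ) : ℂ :=
  Complex.exp (Complex.log (4 * (v : ℂ) ^ 2 - z ^ 2) / 2)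

section aux
variable (v : ℝ) (z : ℂ)

lemma scW_im : (4 * (v : ℂ) ^ 2 - z ^ 2).im = -2 * z.re * z.im := by
  simp [Complex.sub_im, pow_two, Complex.mul_im]; ring

lemma scW_re : (4 * (v : ℂ) ^ 2 - z ^ 2).re = 4 * v ^ 2 - (z.re ^ 2 - z.im ^ 2) := by
  simp [Complex.sub_re, pow_two, Complex.mul_re]

lemma scW_not_neg (hv : 0 < v) (hz : 0 < z.im) :
    ¬((4 * (v : ℂ) ^ 2 - z ^ 2).re < 0 ∧ (4 * (v : ℂ) ^ 2 - z ^ 2).im = 0) := by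
  rintro ⟨h1, h2⟩
  rw [scW_im] at h2
  have hx : z.re = 0 := by
    rcases mul_eq_zero.1 h2 with h | h
    · rcases mul_eq_zero.1 h with h | h
      · norm_num at h
      · exact h
    · exact absurd h (ne_of_gt hz)
  rw [scW_re, hx] at h1
  nlinarith [sq_nonneg z.im, hv]

lemma scW_ne (hv : 0 < v) (hz : 0 < z.im) : (4 * (v : ℂ) ^ 2 - z ^ 2) ≠ 0 := by
  intro h
  have him := congrArg Complex.im h
  rw [scW_im] at him
  simp at him
  have hx : z.re = 0 := him.resolve_right (ne_of_gt hz)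
  have hre := congrArg Complex.re h
  rw [scW_re, hx] at hre
  simp at hre
  nlinarith [sq_nonneg z.im, hv]

lemma scV_sq (hv : 0 < v) (hz : 0 < z.im) : scV v z ^ 2 = 4 * (v : ℂ) ^ 2 - z ^ 2 := by
  rw [scV, ← Complex.exp_nat_mul]
  push_cast
  rw [show (2 : ℂ) * (Complex.log (4 * (v : ℂ) ^ 2 - z ^ 2) / 2) =
      Complex.log (4 * (v : ℂ) ^ 2 - z ^ 2) by ring]
  exact Complex.exp_log (scW_ne v z hv hz)

lemma scV_arg_pi (hv : 0 < v) (hz : 0 < z.im) :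
    Complex.arg (4 * (v : ℂ) ^ 2 - z ^ 2) < Real.pi := by
  have h1 := Complex.arg_le_pi (4 * (v : ℂ) ^ 2 - z ^ 2)
  cases lt_or_eq_of_le h1 with
  | inl h => exact h
  | inr h => exact absurd (Complex.arg_eq_pi_iff.1 h) (scW_not_neg v z hv hz)

lemma scV_re_pos (hv : 0 < v) (hz : 0 < z.im) : 0 < (scV v z).re := by
  rw [scV, Complex.exp_re]
  apply mul_pos (Real.exp_pos _)
  have him : (Complex.log (4 * (v : ℂ) ^ 2 - z ^ 2) / 2).im
      = Complex.arg (4 * (v : ℂ) ^ 2 - z ^ 2) / 2 := by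
    rw [Complex.div_im]
    simp [Complex.log_im, Complex.log_re]
    ring
  rw [him]
  apply Real.cos_pos_of_mem_Ioo
  constructor
  · have := Complex.neg_pi_lt_arg (4 * (v : ℂ) ^ 2 - z ^ 2)
    linarith
  · have := scV_arg_pi v z hv hz
    linarith

end aux

lemma key_ineq (a x y p q lam : ℝ) (hy : 0 < y) (hp : 0 < p)
    (h1 : p ^ 2 - q ^ 2 = a ^ 2 - x ^ 2 + y ^ 2) (h2 : p * q = -(x * y))
    (hl1 : -a ≤ lam) (hl2 : lam ≤ a) :
    0 ≤ (lam - x) * q + y * p := by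
  have key : 0 ≤ (p ^ 2 + x ^ 2 - x * lam) * y := by
    nlinarith [sq_nonneg (x - lam), mul_nonneg (by linarith : (0:ℝ) ≤ a - lam)
      (by linarith : (0:ℝ) ≤ a + lam), sq_nonneg q, sq_nonneg y]
  have heq : ((lam - x) * q + y * p) * p = (p ^ 2 + x ^ 2 - x * lam) * y := by
    linear_combination (lam - x) * h2
  have hmul : 0 ≤ ((lam - x) * q + y * p) * p := heq ▸ key
  exact (mul_nonneg_iff_of_pos_right hp).mp hmul

noncomputable def scU (v : ℝ) (z : ℂ) (lam : ℝ) : ℂ :=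
  (4 * (v : ℂ) ^ 2 - z * lam + scV v z * (Real.sqrt (4 * v ^ 2 - lam ^ 2) : ℝ)) / ((lam : ℂ) - z)

section scu
variable (v : ℝ) (z : ℂ)

lemma scD_ne (hz : 0 < z.im) (lam : ℝ) : (lam : ℂ) - z ≠ 0 := by
  intro h
  have := congrArg Complex.im h
  simp at this
  linarith

lemma scV_rel_re (hv : 0 < v) (hz : 0 < z.im) :
    (scV v z).re ^ 2 - (scV v z).im ^ 2 = 4 * v ^ 2 - z.re ^ 2 + z.im ^ 2 := by
  have h := scV_sq v z hv hz
  have := congrArg Complex.re h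
  rw [scW_re] at this
  simp [pow_two, Complex.mul_re] at this ⊢
  linarith

lemma scV_rel_im (hv : 0 < v) (hz : 0 < z.im) :
    (scV v z).re * (scV v z).im = -(z.re * z.im) := by
  have h := scV_sq v z hv hz
  have := congrArg Complex.im h
  rw [scW_im] at this
  simp [pow_two, Complex.mul_im] at this
  linarith

lemma scU_im_pos (hv : 0 < v) (hz : 0 < z.im) {lam : ℝ}
    (h1 : -(2 * v) < lam) (h2 : lam < 2 * v) : 0 < (scU v z lam).im := by
  set s : ℝ := Real.sqrt (4 * v ^ 2 - lam ^ 2) with hs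
  have hspos : 0 < s := Real.sqrt_pos.mpr (by nlinarith)
  have hs2 : s ^ 2 = 4 * v ^ 2 - lam ^ 2 := Real.sq_sqrt (by nlinarith)
  rw [scU, Complex.div_im, div_sub_div_same]
  apply div_pos
  · have hnum : (4 * (v : ℂ) ^ 2 - z * lam + scV v z * (s : ℂ)).im * ((lam : ℂ) - z).re -
        (4 * (v : ℂ) ^ 2 - z * lam + scV v z * (s : ℂ)).re * ((lam : ℂ) - z).im
        = z.im * s ^ 2 + s * ((lam - z.re) * (scV v z).im + z.im * (scV v z).re) := by
      simp [Complex.add_im, Complex.add_re, Complex.sub_re, Complex.sub_im,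
        Complex.mul_re, Complex.mul_im, Complex.ofReal_re, Complex.ofReal_im]
      simp only [← Complex.ofReal_pow, Complex.ofReal_im, Complex.ofReal_re]
      linear_combination (-z.im) * hs2
    rw [hnum]
    have hkey := key_ineq (2 * v) z.re z.im (scV v z).re (scV v z).im lam hz
      (scV_re_pos v z hv hz) (by have := scV_rel_re v z hv hz; nlinarith)
      (scV_rel_im v z hv hz) (le_of_lt h1) (le_of_lt h2)
    nlinarith [mul_pos hz (mul_pos hspos hspos), mul_nonneg (le_of_lt hspos) hkey]
  · exact Complex.normSq_pos.mpr (scD_ne z hz lam)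

lemma scU_endpoint_pos (hv : 0 < v) (hz : 0 < z.im) : scU v z (2 * v) = (2 * v : ℝ) := by
  have hs : Real.sqrt (4 * v ^ 2 - (2 * v) ^ 2) = 0 := by
    rw [show 4 * v ^ 2 - (2 * v) ^ 2 = 0 by ring, Real.sqrt_zero]
  rw [scU, hs]
  rw [div_eq_iff (scD_ne z hz (2 * v))]
  push_cast
  ring

lemma scU_endpoint_neg (hv : 0 < v) (hz : 0 < z.im) : scU v z (-(2 * v)) = (-(2 * v) : ℝ) := by
  have hs : Real.sqrt (4 * v ^ 2 - (-(2 * v)) ^ 2) = 0 := by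
    rw [show 4 * v ^ 2 - (-(2 * v)) ^ 2 = 0 by ring, Real.sqrt_zero]
  rw [scU, hs]
  rw [div_eq_iff (scD_ne z hz (-(2 * v)))]
  push_cast
  ring

lemma scU_slit (hv : 0 < v) (hz : 0 < z.im) {lam : ℝ}
    (h1 : -(2 * v) ≤ lam) (h2 : lam ≤ 2 * v) :
    -Complex.I * scU v z lam ∈ Complex.slitPlane := by
  rcases eq_or_lt_of_le h1 with h | h1'
  · rw [← h, scU_endpoint_neg v z hv hz]
    rw [Complex.mem_slitPlane_iff]
    right
    simp
    nlinarith
  rcases eq_or_lt_of_le h2 with h | h2'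
  · rw [h, scU_endpoint_pos v z hv hz]
    rw [Complex.mem_slitPlane_iff]
    right
    simp
    nlinarith
  · rw [Complex.mem_slitPlane_iff]
    left
    have := scU_im_pos v z hv hz h1' h2'
    simpa using this

end scu

noncomputable def scF (v : ℝ) (z : ℂ) (lam : ℝ) : ℂ :=
  (Real.sqrt (4 * v ^ 2 - lam ^ 2) : ℝ) - z * (Real.arcsin (lam / (2 * v)) : ℝ)
    - scV v z * Complex.log (-Complex.I * scU v z lam)

section deriv
variable (v : ℝ) (z : ℂ)

lemma scF_hasDerivAt (hv : 0 < v) (hz : 0 < z.im) {lam : ℝ}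
    (h1 : -(2 * v) < lam) (h2 : lam < 2 * v) :
    HasDerivAt (scF v z) ((Real.sqrt (4 * v ^ 2 - lam ^ 2) : ℝ) * ((lam : ℂ) - z)⁻¹) lam := by
  set s : ℝ := Real.sqrt (4 * v ^ 2 - lam ^ 2) with hs
  have hpos : 0 < 4 * v ^ 2 - lam ^ 2 := by nlinarith
  have hspos : 0 < s := Real.sqrt_pos.mpr hpos
  have hs2 : s ^ 2 = 4 * v ^ 2 - lam ^ 2 := Real.sq_sqrt (le_of_lt hpos)
  have hsne : s ≠ 0 := ne_of_gt hspos
  have hSne : (s : ℂ) ≠ 0 := Complex.ofReal_ne_zero.mpr hsne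
  have hD : (lam : ℂ) - z ≠ 0 := scD_ne z hz lam
  have hV2 : scV v z ^ 2 = 4 * (v : ℂ) ^ 2 - z ^ 2 := scV_sq v z hv hz
  have hs2C : (s : ℂ) ^ 2 = 4 * (v : ℂ) ^ 2 - (lam : ℂ) ^ 2 := by
    rw [show (s:ℂ)^2 = ((s^2 : ℝ) : ℂ) by push_cast; ring, hs2]
    push_cast; ring
  -- nonvanishing of u and N
  have hu_ne : scU v z lam ≠ 0 := by
    intro h
    have := scU_im_pos v z hv hz h1 h2
    rw [h] at this; simp at this
  have hN_ne : 4 * (v : ℂ) ^ 2 - z * lam + scV v z * (s : ℂ) ≠ 0 := by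
    intro h
    apply hu_ne
    rw [scU, ← hs, h, zero_div]
  -- derivative of sqrt
  have hs' : HasDerivAt (fun t : ℝ => Real.sqrt (4 * v ^ 2 - t ^ 2)) (-lam / s) lam := by
    have hinner : HasDerivAt (fun t : ℝ => 4 * v ^ 2 - t ^ 2) (-(2 * lam)) lam := by
      simpa using (hasDerivAt_pow 2 lam).const_sub (4 * v ^ 2)
    have := hinner.sqrt (ne_of_gt hpos)
    convert this using 1
    rw [← hs]
    field_simp
  have hsC' : HasDerivAt (fun t : ℝ => ((Real.sqrt (4 * v ^ 2 - t ^ 2) : ℝ) : ℂ))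
      ((-lam / s : ℝ) : ℂ) lam := hs'.ofReal_comp
  have hofReal : HasDerivAt (fun t : ℝ => (t : ℂ)) 1 lam := by
    simpa using (hasDerivAt_id lam).ofReal_comp
  -- derivative of numerator N
  have hN : HasDerivAt
      (fun t : ℝ => 4 * (v : ℂ) ^ 2 - z * t + scV v z * (Real.sqrt (4 * v ^ 2 - t ^ 2) : ℝ))
      (-z + scV v z * ((-lam / s : ℝ) : ℂ)) lam := by
    have := ((hofReal.const_mul z).const_sub (4 * (v : ℂ) ^ 2)).add (hsC'.const_mul (scV v z))
    exact this.congr_deriv (by ring)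
  have hDD : HasDerivAt (fun t : ℝ => (t : ℂ) - z) 1 lam := hofReal.sub_const z
  -- derivative of u
  have hU : HasDerivAt (scU v z)
      (((-z + scV v z * ((-lam / s : ℝ) : ℂ)) * ((lam : ℂ) - z)
          - (4 * (v : ℂ) ^ 2 - z * lam + scV v z * (s : ℂ)) * 1) / ((lam : ℂ) - z) ^ 2) lam := by
    have := hN.div hDD hD
    rw [← hs] at this
    exact this
  set U : ℂ := ((-z + scV v z * ((-lam / s : ℝ) : ℂ)) * ((lam : ℂ) - z)
      - (4 * (v : ℂ) ^ 2 - z * lam + scV v z * (s : ℂ)) * 1) / ((lam : ℂ) - z) ^ 2 with hUdef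
  -- derivative of the log term
  have hlog : HasDerivAt (fun t : ℝ => Complex.log (-Complex.I * scU v z t))
      ((-Complex.I * U) / (-Complex.I * scU v z lam)) lam :=
    (hU.const_mul (-Complex.I)).clog_real (scU_slit v z hv hz (le_of_lt h1) (le_of_lt h2))
  -- derivative of arcsin term
  have harc : HasDerivAt (fun t : ℝ => Real.arcsin (t / (2 * v))) (1 / s) lam := by
    have hne1 : lam / (2 * v) ≠ -1 := by
      intro h
      have : lam = -(2 * v) := by field_simp at h; linarith
      linarith
    have hne2 : lam / (2 * v) ≠ 1 := by
      intro h
      have : lam = 2 * v := by field_simp at h; linarith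
      linarith
    have hdiv : HasDerivAt (fun t : ℝ => t / (2 * v)) (1 / (2 * v)) lam :=
      (hasDerivAt_id lam).div_const (2 * v)
    have hcomp := (Real.hasDerivAt_arcsin hne1 hne2).comp lam hdiv
    refine hcomp.congr_deriv ?_
    have hsq : Real.sqrt (1 - (lam / (2 * v)) ^ 2) = s / (2 * v) := by
      rw [show 1 - (lam / (2 * v)) ^ 2 = (4 * v ^ 2 - lam ^ 2) / (2 * v) ^ 2 by
        field_simp; ring]
      rw [Real.sqrt_div (le_of_lt hpos), Real.sqrt_sq (by linarith)]
    rw [hsq]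
    field_simp
  have harcC : HasDerivAt (fun t : ℝ => ((Real.arcsin (t / (2 * v)) : ℝ) : ℂ))
      ((1 / s : ℝ) : ℂ) lam := harc.ofReal_comp
  -- assemble
  have hF : HasDerivAt (scF v z)
      (((-lam / s : ℝ) : ℂ) - z * ((1 / s : ℝ) : ℂ)
        - scV v z * ((-Complex.I * U) / (-Complex.I * scU v z lam))) lam := by
    exact (hsC'.sub (harcC.const_mul z)).sub (hlog.const_mul (scV v z))
  convert hF using 1
  -- simplify the log derivative
  have hIne : (-Complex.I : ℂ) ≠ 0 := by simp [Complex.I_ne_zero]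
  have hcancel : (-Complex.I * U) / (-Complex.I * scU v z lam) = U / scU v z lam :=
    mul_div_mul_left _ _ hIne
  rw [hcancel]
  have hukey : U / scU v z lam = -scV v z / ((s : ℂ) * ((lam : ℂ) - z)) := by
    rw [hUdef, scU, ← hs]
    push_cast
    field_simp
    linear_combination (s:ℂ) * hV2 - (scV v z) * hs2C
  rw [hukey]
  push_cast
  field_simp
  linear_combination hs2C - hV2

lemma scU_continuous (hz : 0 < z.im) : Continuous (scU v z) := by
  apply Continuous.div
  · apply Continuous.add
    · exact continuous_const.sub (continuous_const.mul
        (Complex.continuous_ofReal))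
    · exact continuous_const.mul (Complex.continuous_ofReal.comp
        (Real.continuous_sqrt.comp (by continuity)))
  · exact (Complex.continuous_ofReal).sub continuous_const
  · exact fun x => scD_ne z hz x

lemma scF_continuousOn (hv : 0 < v) (hz : 0 < z.im) :
    ContinuousOn (scF v z) (Set.Icc (-(2 * v)) (2 * v)) := by
  unfold scF
  apply ContinuousOn.sub
  apply ContinuousOn.sub
  · exact (Complex.continuous_ofReal.comp
      (Real.continuous_sqrt.comp (by continuity))).continuousOn
  · exact (continuous_const.mul (Complex.continuous_ofReal.comp
      (Real.continuous_arcsin.comp (continuous_id.div_const _)))).continuousOn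
  · apply ContinuousOn.mul continuousOn_const
    apply ContinuousOn.clog
    · exact (continuous_const.mul (scU_continuous v z hz)).continuousOn
    · intro x hx
      exact scU_slit v z hv hz hx.1 hx.2

lemma sc_log_diff (hv : 0 < v) :
    Complex.log (-Complex.I * ((2 * v : ℝ) : ℂ)) - Complex.log (-Complex.I * ((-(2 * v) : ℝ) : ℂ))
      = -(Real.pi : ℂ) * Complex.I := by
  have h2v : (0 : ℝ) < 2 * v := by linarith
  set w : ℂ := ((2 * v : ℝ) : ℂ) * Complex.I with hw
  have h0 : -Complex.I * ((2 * v : ℝ) : ℂ) = (starRingEnd ℂ) w := by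
    rw [hw, map_mul, Complex.conj_I, Complex.conj_ofReal]; ring
  have h1 : -Complex.I * ((-(2 * v) : ℝ) : ℂ) = w := by
    rw [hw]; push_cast; ring
  have hargw : w.arg = Real.pi / 2 := by
    rw [hw, Complex.arg_real_mul _ h2v, Complex.arg_I]
  have hargne : w.arg ≠ Real.pi := by
    rw [hargw]; have := Real.pi_pos; intro h; linarith
  rw [h0, h1, Complex.log_conj _ hargne]
  have hsub := Complex.sub_conj (Complex.log w)
  have : (starRingEnd ℂ) (Complex.log w) - Complex.log w = -(2 * (Complex.log w).im * Complex.I) := by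
    have := Complex.sub_conj (Complex.log w)
    push_cast at this ⊢
    linear_combination -this
  rw [this, Complex.log_im, hargw]
  push_cast
  ring


lemma scF_top (hv : 0 < v) (hz : 0 < z.im) :
    scF v z (2 * v) = -z * (Real.pi / 2 : ℝ)
      - scV v z * Complex.log (-Complex.I * ((2 * v : ℝ) : ℂ)) := by
  rw [scF, scU_endpoint_pos v z hv hz]
  have hs : Real.sqrt (4 * v ^ 2 - (2 * v) ^ 2) = 0 := by
    rw [show 4 * v ^ 2 - (2 * v) ^ 2 = 0 by ring, Real.sqrt_zero]
  have ha : Real.arcsin (2 * v / (2 * v)) = Real.pi / 2 := by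
    rw [div_self (by linarith : (2 : ℝ) * v ≠ 0), Real.arcsin_one]
  rw [hs, ha]
  push_cast
  ring

lemma scF_bot (hv : 0 < v) (hz : 0 < z.im) :
    scF v z (-(2 * v)) = -z * (-(Real.pi / 2) : ℝ)
      - scV v z * Complex.log (-Complex.I * ((-(2 * v) : ℝ) : ℂ)) := by
  rw [scF, scU_endpoint_neg v z hv hz]
  have hs : Real.sqrt (4 * v ^ 2 - (-(2 * v)) ^ 2) = 0 := by
    rw [show 4 * v ^ 2 - (-(2 * v)) ^ 2 = 0 by ring, Real.sqrt_zero]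
  have ha : Real.arcsin (-(2 * v) / (2 * v)) = -(Real.pi / 2) := by
    rw [show -(2 * v) / (2 * v) = -(2 * v / (2 * v)) by ring,
      div_self (by linarith : (2 : ℝ) * v ≠ 0), Real.arcsin_neg, Real.arcsin_one]
  rw [hs, ha]
  push_cast
  ring

lemma sc_interval_integral (hv : 0 < v) (hz : 0 < z.im) :
    ∫ lam in (-(2 * v))..(2 * v), (Real.sqrt (4 * v ^ 2 - lam ^ 2) : ℝ) * ((lam : ℂ) - z)⁻¹
      = Real.pi * (-z + Complex.I * scV v z) := by
  have hab : -(2 * v) ≤ 2 * v := by linarith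
  have hcontf : Continuous fun lam : ℝ =>
      ((Real.sqrt (4 * v ^ 2 - lam ^ 2) : ℝ) : ℂ) * ((lam : ℂ) - z)⁻¹ := by
    apply Continuous.mul
    · exact Complex.continuous_ofReal.comp (Real.continuous_sqrt.comp (by continuity))
    · exact ((Complex.continuous_ofReal.sub continuous_const).inv₀ (fun x => scD_ne z hz x))
  rw [intervalIntegral.integral_eq_sub_of_hasDeriv_right_of_le hab
    (scF_continuousOn v z hv hz)
    (fun x hx => (scF_hasDerivAt v z hv hz hx.1 hx.2).hasDerivWithinAt)
    (hcontf.intervalIntegrable _ _)]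
  rw [scF_top v z hv hz, scF_bot v z hv hz]
  have hld := sc_log_diff v hv
  push_cast at hld ⊢
  linear_combination (-(scV v z)) * hld

end deriv

/-- The Stieltjes transform of the semicircle distribution satisfies
`v² g² + z g + 1 = 0` in the upper half-plane. -/
theorem sc_stieltjes_quadratic (v : ℝ) (hv : 0 < v) (z : ℂ) (hz : 0 < z.im) :
    (v : ℂ) ^ 2 * (∫ lam : ℝ, (scDensity v lam : ℂ) * ((lam : ℂ) - z)⁻¹) ^ 2
      + z * (∫ lam : ℝ, (scDensity v lam : ℂ) * ((lam : ℂ) - z)⁻¹) + 1 = 0 := by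
  have hab : -(2 * v) ≤ 2 * v := by linarith
  have hEq : (fun lam : ℝ => (scDensity v lam : ℂ) * ((lam : ℂ) - z)⁻¹)
      = Set.indicator (Set.Icc (-(2 * v)) (2 * v))
          (fun lam => ((1 / (2 * Real.pi * v ^ 2) * Real.sqrt (4 * v ^ 2 - lam ^ 2) : ℝ) : ℂ)
            * ((lam : ℂ) - z)⁻¹) := by
    funext lam
    rw [Set.indicator_apply]
    by_cases h : lam ∈ Set.Icc (-(2 * v)) (2 * v)
    · rw [if_pos h, scDensity, if_pos (abs_le.mpr (Set.mem_Icc.mp h))]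
    · rw [if_neg h, scDensity, if_neg (fun hc => h (Set.mem_Icc.mpr (abs_le.mp hc)))]
      simp
  have hInt : (∫ lam : ℝ, (scDensity v lam : ℂ) * ((lam : ℂ) - z)⁻¹)
      = ((1 / (2 * Real.pi * v ^ 2) : ℝ) : ℂ) * (Real.pi * (-z + Complex.I * scV v z)) := by
    rw [hEq, MeasureTheory.integral_indicator measurableSet_Icc,
      MeasureTheory.integral_Icc_eq_integral_Ioc, ← intervalIntegral.integral_of_le hab]
    simp_rw [Complex.ofReal_mul, mul_assoc]
    rw [intervalIntegral.integral_const_mul, sc_interval_integral v z hv hz]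
  rw [hInt]
  have hV2 := scV_sq v z hv hz
  have hπ : (Real.pi : ℂ) ≠ 0 := Complex.ofReal_ne_zero.mpr Real.pi_ne_zero
  have hvC : (v : ℂ) ≠ 0 := Complex.ofReal_ne_zero.mpr (ne_of_gt hv)
  push_cast
  field_simp
  have hI : (Complex.I : ℂ) ^ 2 = -1 := Complex.I_sq
  linear_combination (scV v z)^2 * hI - hV2
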